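/- Under Assumption 1, with C(ω) := {t ∈ ℤ : I_t(ω) = 1}, for every subset A of the integers with 0 ∈ A, all integers t₁ ≤ 0 ≤ t₂, and every a ∈ A ∩ [t₁, t₂], one has P(C ∩ [t₁, t₂] = A ∩ [t₁, t₂]) = P(C ∩ [t₁ − a, t₂ − a] = (A − a) ∩ [t₁ − a, t₂ − a]), where A − a := {t ∈ ℤ : a + t ∈ A}. -/

import Mathlib

open MeasureTheory Filter Set ENNReal

noncomputable section

/-- The cluster `C(ω) = {t : I_t(ω) = 1}` of a binary process. -/
def clusterSet {Ω : Type*} (I : ℤ → Ω → Bool) (ω : Ω) : Set ℤ :=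
  {t : ℤ | I t ω = true}

/-- Inspected cluster size `Sⁱ(ω) = Σ_{t ∈ ℤ} I_t(ω) ∈ ℕ ∪ {∞}`. -/
def SiFn {Ω : Type*} (I : ℤ → Ω → Bool) (ω : Ω) : ℕ∞ :=
  {t : ℤ | I t ω = true}.encard

/-- Forward inspected cluster size `S₊ⁱ(ω) = Σ_{t ≥ 1} I_t(ω) ∈ ℕ₀ ∪ {∞}`. -/
def SplusFn {Ω : Type*} (I : ℤ → Ω → Bool) (ω : Ω) : ℕ∞ :=
  {t : ℤ | 0 < t ∧ I t ω = true}.encard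

/-- Backward inspected cluster size `S₋ⁱ(ω) = Σ_{t ≤ -1} I_t(ω) ∈ ℕ₀ ∪ {∞}`. -/
def SminusFn {Ω : Type*} (I : ℤ → Ω → Bool) (ω : Ω) : ℕ∞ :=
  {t : ℤ | t < 0 ∧ I t ω = true}.encard

/-- Corollary 2.2(b): under Assumption 1, with `C(ω) = {t : I_t(ω) = 1}`,
for `A ⊆ ℤ` with `0 ∈ A`, integers `t₁ ≤ 0 ≤ t₂` and `a ∈ A ∩ [t₁, t₂]`,
`P(C ∩ [t₁,t₂] = A ∩ [t₁,t₂]) = P(C ∩ [t₁-a, t₂-a] = (A-a) ∩ [t₁-a, t₂-a])`. -/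
theorem time_change_cluster_interval
    {Ω : Type*} [MeasurableSpace Ω] (P : Measure Ω) [IsProbabilityMeasure P]
    (I : ℤ → Ω → Bool) (hI : ∀ t, Measurable (I t))
    {Ωn : ℕ → Type*} [∀ n, MeasurableSpace (Ωn n)]
    (Pn : ∀ n, Measure (Ωn n)) (hPn : ∀ n, IsProbabilityMeasure (Pn n))
    (In : ∀ n, ℤ → Ωn n → Bool) (hIn : ∀ n t, Measurable (In n t))
    -- `P(I₀ⁿ = 1) > 0` for all `n`
    (hpos : ∀ n, 0 < Pn n {ω | In n 0 ω = true})
    -- stationarity of each `(Iₜⁿ)ₜ`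
    (hstat : ∀ n (F : Finset ℤ) (ε : ℤ → Bool) (k : ℤ),
      Pn n {ω | ∀ t ∈ F, In n t ω = ε t} = Pn n {ω | ∀ t ∈ F, In n (t + k) ω = ε t})
    -- convergence of the conditional finite-dimensional distributions
    (hconv : ∀ (F : Finset ℤ) (ε : ℤ → Bool),
      Tendsto (fun n =>
          Pn n ({ω | ∀ t ∈ F, In n t ω = ε t} ∩ {ω | In n 0 ω = true})
            / Pn n {ω | In n 0 ω = true}) atTop
        (nhds (P {ω | ∀ t ∈ F, I t ω = ε t})))

    (A : Set ℤ) (hA : (0 : ℤ) ∈ A) (t₁ t₂ : ℤ) (ht₁ : t₁ ≤ 0) (ht₂ : 0 ≤ t₂)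
    (a : ℤ) (haA : a ∈ A) (ha₁ : t₁ ≤ a) (ha₂ : a ≤ t₂) :
    P {ω | clusterSet I ω ∩ Set.Icc t₁ t₂ = A ∩ Set.Icc t₁ t₂}
      = P {ω | clusterSet I ω ∩ Set.Icc (t₁ - a) (t₂ - a)
            = {t : ℤ | a + t ∈ A} ∩ Set.Icc (t₁ - a) (t₂ - a)} := by
  classical
  set F : Finset ℤ := Finset.Icc t₁ t₂ with hF
  set F' : Finset ℤ := Finset.Icc (t₁ - a) (t₂ - a) with hF'
  set ε : ℤ → Bool := fun t => decide (t ∈ A) with hε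
  set ε' : ℤ → Bool := fun t => decide (a + t ∈ A) with hε'
  -- rewrite both events as finite-dimensional events
  have hev : ∀ (A' : Set ℤ) (u v : ℤ),
      {ω | clusterSet I ω ∩ Set.Icc u v = A' ∩ Set.Icc u v}
        = {ω | ∀ t ∈ Finset.Icc u v, I t ω = decide (t ∈ A')} := by
    intro A' u v
    ext ω
    simp only [Set.mem_setOf_eq, Set.ext_iff, Set.mem_inter_iff, clusterSet,
      Set.mem_setOf_eq, Set.mem_Icc, Finset.mem_Icc]
    constructor
    · intro h t ht
      have h' := h t
      by_cases hta : t ∈ A'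
      · simpa [ht.1, ht.2, hta] using h'.mpr ⟨hta, ht⟩
      · simp only [hta, decide_false]
        by_contra hc
        have : I t ω = true := by
          cases hb : I t ω with
          | false => exact absurd hb hc
          | true => rfl
        exact hta (h'.mp ⟨this, ht⟩).1
    · intro h t
      constructor
      · rintro ⟨h1, h2⟩
        have := h t h2
        rw [h1] at this
        exact ⟨of_decide_eq_true this.symm, h2⟩
      · rintro ⟨h1, h2⟩
        have := h t h2
        simp [h1] at this
        exact ⟨this, h2⟩
  have hLHS : {ω | clusterSet I ω ∩ Set.Icc t₁ t₂ = A ∩ Set.Icc t₁ t₂}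
      = {ω | ∀ t ∈ F, I t ω = ε t} := hev A t₁ t₂
  have hRHS : {ω | clusterSet I ω ∩ Set.Icc (t₁ - a) (t₂ - a)
        = {t : ℤ | a + t ∈ A} ∩ Set.Icc (t₁ - a) (t₂ - a)}
      = {ω | ∀ t ∈ F', I t ω = ε' t} :=
    hev {t : ℤ | a + t ∈ A} (t₁ - a) (t₂ - a)
  -- the approximating sequences coincide
  have hseq : ∀ n,
      Pn n ({ω | ∀ t ∈ F, In n t ω = ε t} ∩ {ω | In n 0 ω = true})
          / Pn n {ω | In n 0 ω = true}
        = Pn n ({ω | ∀ t ∈ F', In n t ω = ε' t} ∩ {ω | In n 0 ω = true})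
          / Pn n {ω | In n 0 ω = true} := by
    intro n
    have habs1 : ({ω | ∀ t ∈ F, In n t ω = ε t} ∩ {ω | In n 0 ω = true})
        = {ω | ∀ t ∈ F, In n t ω = ε t} := by
      apply Set.inter_eq_left.mpr
      intro ω hω
      have h0 : (0 : ℤ) ∈ F := by simp [hF, Finset.mem_Icc]; omega
      have := hω 0 h0
      simpa [hε, hA] using this
    have habs2 : ({ω | ∀ t ∈ F', In n t ω = ε' t} ∩ {ω | In n 0 ω = true})
        = {ω | ∀ t ∈ F', In n t ω = ε' t} := by
      apply Set.inter_eq_left.mpr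
      intro ω hω
      have h0 : (0 : ℤ) ∈ F' := by simp [hF', Finset.mem_Icc]; omega
      have := hω 0 h0
      simpa [hε', haA] using this
    rw [habs1, habs2]
    congr 1
    have hst := hstat n F' ε' a
    rw [hst]
    congr 1
    ext ω
    simp only [Set.mem_setOf_eq]
    constructor
    · intro h t ht
      have ht' : t + a ∈ F := by
        simp only [hF, hF', Finset.mem_Icc] at ht ⊢; omega
      have := h (t + a) ht'
      simpa [hε, hε', add_comm] using this
    · intro h t ht
      have ht' : t - a ∈ F' := by
        simp only [hF, hF', Finset.mem_Icc] at ht ⊢; omega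
      have := h (t - a) ht'
      have e1 : t - a + a = t := by ring
      have e2 : a + (t - a) = t := by ring
      rw [e1] at this
      simpa [hε, hε', e2] using this
  -- conclude by uniqueness of limits
  rw [hLHS, hRHS]
  exact tendsto_nhds_unique
    ((hconv F ε).congr (fun n => (hseq n))) (hconv F' ε')
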